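/- Let G, H, J : I × ℝ → ℝ be C¹ functions, 2π-periodic in the second variable θ, on I × ℝ with I ⊂ (0,∞) an interval, satisfying (∂/∂t − ∂/∂θ)(G + H) = J, (∂/∂t + ∂/∂θ)(G − H) = J, G ≥ 0, |H| ≤ G, and J(t,θ) ≤ G(t,θ)/t everywhere. Then for all t₀, t̂ ∈ I with t₀ ≤ t̂: sup_θ G(t̂, θ) ≤ 2 sup_θ G(t₀, θ) + 2 sup_θ |H(t₀, θ)| + ∫_{t₀}^{t̂} (1/s)·sup_θ G(s, θ) ds. -/

import Mathlib

open Real Set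

/-- Partial derivative with respect to the first (time) variable. -/
noncomputable def pd1 (f : ℝ → ℝ → ℝ) (t θ : ℝ) : ℝ := deriv (fun s => f s θ) t
/-- Partial derivative with respect to the second (space) variable. -/
noncomputable def pd2 (f : ℝ → ℝ → ℝ) (t θ : ℝ) : ℝ := deriv (fun x => f t x) θ

lemma hasDerivAt_line (f : ℝ → ℝ → ℝ) (hf : ContDiff ℝ 1 (Function.uncurry f))
    (c ε t : ℝ) :
    HasDerivAt (fun s => f s (c + ε * s))
      (pd1 f t (c + ε * t) + ε * pd2 f t (c + ε * t)) t := by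
  have hd : Differentiable ℝ (Function.uncurry f) := hf.differentiable one_ne_zero
  set p : ℝ × ℝ := (t, c + ε * t) with hp
  have hφ : HasFDerivAt (Function.uncurry f) (fderiv ℝ (Function.uncurry f) p) p :=
    (hd p).hasFDerivAt
  have hline : HasDerivAt (fun s : ℝ => c + ε * s) ε t := by
    simpa using ((hasDerivAt_id t).const_mul ε).const_add c
  have hγ : HasDerivAt (fun s : ℝ => ((s : ℝ), c + ε * s)) ((1:ℝ), ε) t :=
    (hasDerivAt_id t).prodMk hline
  have hcomp := hφ.comp_hasDerivAt t hγ
  have h1 : pd1 f t (c + ε * t) = fderiv ℝ (Function.uncurry f) p ((1:ℝ), (0:ℝ)) := by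
    have hγ1 : HasDerivAt (fun s : ℝ => ((s:ℝ), c + ε * t)) ((1:ℝ), (0:ℝ)) t :=
      (hasDerivAt_id t).prodMk (hasDerivAt_const t _)
    exact (hφ.comp_hasDerivAt t hγ1).deriv
  have h2 : pd2 f t (c + ε * t) = fderiv ℝ (Function.uncurry f) p ((0:ℝ), (1:ℝ)) := by
    have hγ2 : HasDerivAt (fun x : ℝ => ((t:ℝ), x)) ((0:ℝ), (1:ℝ)) (c + ε * t) :=
      (hasDerivAt_const _ t).prodMk (hasDerivAt_id _)
    exact (hφ.comp_hasDerivAt (c + ε * t) hγ2).deriv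
  have heps : ((1:ℝ), ε) = ((1:ℝ),(0:ℝ)) + ε • ((0:ℝ),(1:ℝ)) := by
    simp [Prod.ext_iff]
  have key : fderiv ℝ (Function.uncurry f) p ((1:ℝ), ε)
      = pd1 f t (c + ε * t) + ε * pd2 f t (c + ε * t) := by
    rw [h1, h2, heps, map_add, map_smul, smul_eq_mul]
  exact key ▸ hcomp

/-- The supremum inequality obtained from the null-cone integral representation
of the energy `G` of the T³-Gowdy EMDA system, taking supremums over the
`2π`-periodic spatial variable `θ`. -/
theorem sup_energy_inequality
    (G H J : ℝ → ℝ → ℝ) (I : Set ℝ) (hI : I ⊆ Ioi 0) (hIconn : I.OrdConnected)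
    (hG : ContDiff ℝ 1 (Function.uncurry G))
    (hH : ContDiff ℝ 1 (Function.uncurry H))
    (hJ : ContDiff ℝ 1 (Function.uncurry J))
    (hGper : ∀ t : ℝ, Function.Periodic (G t) (2*π))
    (hHper : ∀ t : ℝ, Function.Periodic (H t) (2*π))
    (hJper : ∀ t : ℝ, Function.Periodic (J t) (2*π))
    (hminus : ∀ t ∈ I, ∀ θ : ℝ,
      pd1 (fun t θ => G t θ + H t θ) t θ - pd2 (fun t θ => G t θ + H t θ) t θ = J t θ)
    (hplus : ∀ t ∈ I, ∀ θ : ℝ,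
      pd1 (fun t θ => G t θ - H t θ) t θ + pd2 (fun t θ => G t θ - H t θ) t θ = J t θ)
    (hGpos : ∀ t ∈ I, ∀ θ : ℝ, 0 ≤ G t θ)
    (hHG : ∀ t ∈ I, ∀ θ : ℝ, |H t θ| ≤ G t θ)
    (hJG : ∀ t ∈ I, ∀ θ : ℝ, J t θ ≤ G t θ / t) :
    ∀ t₀ ∈ I, ∀ tf ∈ I, t₀ ≤ tf →
      (⨆ θ : ℝ, G tf θ) ≤
        2 * (⨆ θ : ℝ, G t₀ θ) + 2 * (⨆ θ : ℝ, |H t₀ θ|)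
          + ∫ s in t₀..tf, (1/s) * ⨆ θ : ℝ, G s θ := by
  intro t₀ ht₀ tf htf hle
  have hIcc : Icc t₀ tf ⊆ I := hIconn.out ht₀ htf
  have hGc : Continuous (Function.uncurry G) := hG.continuous
  have sliceG : ∀ s, Continuous (G s) :=
    fun s => hGc.comp (continuous_const.prodMk continuous_id)
  have sliceH : Continuous (H t₀) :=
    hH.continuous.comp (continuous_const.prodMk continuous_id)
  have hMb : ∀ s, BddAbove (range (G s)) := by
    intro s
    rw [← (hGper s).image_Icc Real.two_pi_pos 0]
    exact (isCompact_Icc.image (sliceG s)).bddAbove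
  have hNb : BddAbove (range (fun θ => |H t₀ θ|)) := by
    have : range (fun θ => |H t₀ θ|) = (fun θ => |H t₀ θ|) '' Icc 0 (0 + 2*π) :=
      (Function.Periodic.image_Icc (f := fun θ => |H t₀ θ|)
        (fun x => by simp [hHper t₀ x]) Real.two_pi_pos 0).symm
    rw [this]
    exact (isCompact_Icc.image sliceH.abs).bddAbove
  have hMle : ∀ s x, G s x ≤ ⨆ θ, G s θ := fun s x => le_ciSup (hMb s) x
  have hM0 : (0:ℝ) ≤ ⨆ θ, G t₀ θ := le_trans (hGpos t₀ ht₀ 0) (hMle t₀ 0)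
  have hNle : ∀ x, |H t₀ x| ≤ ⨆ θ, |H t₀ θ| := fun x => le_ciSup hNb x
  have hN0 : (0:ℝ) ≤ ⨆ θ, |H t₀ θ| := le_trans (abs_nonneg _) (hNle 0)
  have hMcont : Continuous (fun s => ⨆ θ, G s θ) := by
    have he : (fun s => ⨆ θ, G s θ) = fun s => sSup (G s '' Icc 0 (0 + 2*π)) := by
      funext s
      rw [(hGper s).image_Icc Real.two_pi_pos 0]
      rfl
    rw [he]
    exact isCompact_Icc.continuous_sSup hGc
  have hpos : ∀ s ∈ Icc t₀ tf, (0:ℝ) < s := fun s hs => hI (hIcc hs)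
  have hMint : IntervalIntegrable (fun s => (1/s) * ⨆ θ, G s θ)
      MeasureTheory.volume t₀ tf := by
    apply ContinuousOn.intervalIntegrable
    rw [uIcc_of_le hle]
    exact (continuousOn_const.div continuousOn_id
      (fun x hx => (hpos x hx).ne')).mul hMcont.continuousOn
  have hJint : ∀ (c ε : ℝ),
      IntervalIntegrable (fun s => J s (c + ε * s)) MeasureTheory.volume t₀ tf := by
    intro c ε
    exact (hJ.continuous.comp (continuous_id.prodMk
      (continuous_const.add (continuous_const.mul continuous_id)))).intervalIntegrable _ _
  have hIb : ∀ (c ε : ℝ),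
      (∫ s in t₀..tf, J s (c + ε * s)) ≤ ∫ s in t₀..tf, (1/s) * ⨆ θ, G s θ := by
    intro c ε
    apply intervalIntegral.integral_mono_on hle (hJint c ε) hMint
    intro x hx
    have hxI := hIcc hx
    have hx0 := hpos x hx
    calc J x (c + ε * x) ≤ G x (c + ε * x) / x := hJG x hxI _
      _ = (1/x) * G x (c + ε * x) := by ring
      _ ≤ (1/x) * ⨆ θ, G x θ :=
          mul_le_mul_of_nonneg_left (hMle x _) (by positivity)
  refine ciSup_le fun θ => ?_
  -- plus characteristic: ε = -1
  have FTCp : ∫ s in t₀..tf, J s ((θ + tf) + (-1) * s)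
      = (G tf ((θ + tf) + (-1) * tf) + H tf ((θ + tf) + (-1) * tf))
        - (G t₀ ((θ + tf) + (-1) * t₀) + H t₀ ((θ + tf) + (-1) * t₀)) := by
    apply intervalIntegral.integral_eq_sub_of_hasDerivAt
      (f := fun s => G s ((θ + tf) + (-1) * s) + H s ((θ + tf) + (-1) * s))
      _ (hJint (θ + tf) (-1))
    intro x hx
    rw [uIcc_of_le hle] at hx
    have h := hasDerivAt_line (fun a b => G a b + H a b) (hG.add hH) (θ + tf) (-1) x
    have h2 := hminus x (hIcc hx) ((θ + tf) + (-1) * x)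
    exact h.congr_deriv (by rw [← h2]; ring)
  have FTCm : ∫ s in t₀..tf, J s ((θ - tf) + 1 * s)
      = (G tf ((θ - tf) + 1 * tf) - H tf ((θ - tf) + 1 * tf))
        - (G t₀ ((θ - tf) + 1 * t₀) - H t₀ ((θ - tf) + 1 * t₀)) := by
    apply intervalIntegral.integral_eq_sub_of_hasDerivAt
      (f := fun s => G s ((θ - tf) + 1 * s) - H s ((θ - tf) + 1 * s))
      _ (hJint (θ - tf) 1)
    intro x hx
    rw [uIcc_of_le hle] at hx
    have h := hasDerivAt_line (fun a b => G a b - H a b) (hG.sub hH) (θ - tf) 1 x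
    have h2 := hplus x (hIcc hx) ((θ - tf) + 1 * x)
    exact h.congr_deriv (by rw [← h2]; ring)
  have ea : (θ + tf) + (-1) * tf = θ := by ring
  have eb : (θ - tf) + 1 * tf = θ := by ring
  rw [ea] at FTCp
  rw [eb] at FTCm
  set a := (θ + tf) + (-1) * t₀ with ha
  set b := (θ - tf) + 1 * t₀ with hb
  have hA : G t₀ a + H t₀ a ≤ (⨆ θ, G t₀ θ) + ⨆ θ, |H t₀ θ| :=
    add_le_add (hMle t₀ a) (le_trans (le_abs_self _) (hNle a))
  have hB : G t₀ b - H t₀ b ≤ (⨆ θ, G t₀ θ) + ⨆ θ, |H t₀ θ| := by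
    have := le_trans (neg_abs_le (H t₀ b)) (le_of_eq rfl)
    have h' : -H t₀ b ≤ |H t₀ b| := neg_le_abs _
    linarith [hMle t₀ b, hNle b]
  have hi1 := hIb (θ + tf) (-1)
  have hi2 := hIb (θ - tf) 1
  linarith [FTCp, FTCm]
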